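/- Let H be a complex Hilbert space, N ≥ 1, Ω ∈ H, and let e_1, …, e_N be bounded operators on H that are orthogonal projections (e_i* = e_i, e_i² = e_i), pairwise orthogonal (e_i e_j = 0 for i ≠ j), satisfy Σ_{i=1}^N e_i = 1, and e_i Ω ≠ 0 for every i. Then for every t > 0 and every ξ ∈ H: inf_{ζ ∈ H} ( t·|⟨Ω, ζ⟩|² + Σ_{i=1}^N |⟨e_i Ω, ξ − ζ⟩|² ) = ( t / (N·t + 1) ) · |⟨Ω, ξ⟩|². -/

import Mathlib

open scoped InnerProductSpace
open Filter

namespace BSPaper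

private lemma aux_real (n t A B Q S : ℝ) (hn : 1 ≤ n) (ht : 0 < t)
    (hA : 0 ≤ A) (hB : 0 ≤ B) (hQ : 0 ≤ Q) (hS : 0 ≤ S)
    (hSle : S ≤ A + B) (hBQ : B ^ 2 ≤ n * Q) :
    t / (n * t + 1) * S ^ 2 ≤ t * A ^ 2 + Q := by
  have hn0 : (0:ℝ) < n := by linarith
  have hpos : (0:ℝ) < n * t + 1 := by nlinarith
  rw [div_mul_eq_mul_div, div_le_iff₀ hpos]
  have hS2 : S ^ 2 ≤ (A + B) ^ 2 := by nlinarith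
  nlinarith [sq_nonneg (n * t * A - B), mul_pos ht hn0,
    mul_le_mul_of_nonneg_left hBQ ht.le, mul_nonneg hA hB,
    mul_le_mul_of_nonneg_left hS2 ht.le, mul_nonneg (mul_nonneg hn0.le ht.le) hQ]

/-- The parallel-sum computation for an `N`-ary measurement: for mutually
orthogonal nonzero projections `e_1, …, e_N` summing to `1` with `e_i Ω ≠ 0`, and `t > 0`,
`inf_ζ ( t·|⟨Ω, ζ⟩|² + Σ_i |⟨e_i Ω, ξ − ζ⟩|² ) = (t/(N t + 1))·|⟨Ω, ξ⟩|²`. -/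
theorem measurement_parallel_sum {H : Type*} [NormedAddCommGroup H]
    [InnerProductSpace ℂ H] [CompleteSpace H]
    (N : ℕ) (hN : 1 ≤ N) (Ω : H) (e : Fin N → (H →L[ℂ] H))
    (hsa : ∀ i, IsSelfAdjoint (e i))
    (hidem : ∀ i, e i * e i = e i)
    (horth : ∀ i j, i ≠ j → e i * e j = 0)
    (hsum : ∑ i, e i = 1)
    (hne : ∀ i, e i Ω ≠ 0)
    (t : ℝ) (ht : 0 < t) (ξ : H) :
    (⨅ ζ : H, (t * Complex.normSq ⟪Ω, ζ⟫_ℂ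
        + ∑ i, Complex.normSq ⟪e i Ω, ξ - ζ⟫_ℂ))
      = (t / (N * t + 1)) * Complex.normSq ⟪Ω, ξ⟫_ℂ := by
  have hn1 : (1:ℝ) ≤ (N:ℝ) := by exact_mod_cast hN
  have hpos : (0:ℝ) < (N:ℝ) * t + 1 := by nlinarith
  -- key decomposition: ⟪Ω, v⟫ = ∑ ⟪e i Ω, v⟫
  have hsym : ∀ i (x y : H), ⟪e i Ω, y⟫_ℂ = ⟪Ω, e i y⟫_ℂ := by
    intro i x y; exact (hsa i).isSymmetric Ω y
  have key : ∀ v : H, ⟪Ω, v⟫_ℂ = ∑ i, ⟪e i Ω, v⟫_ℂ := by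
    intro v
    have h1 : (∑ i, e i) v = v := by rw [hsum]; rfl
    calc ⟪Ω, v⟫_ℂ = ⟪Ω, (∑ i, e i) v⟫_ℂ := by rw [h1]
      _ = ∑ i, ⟪Ω, e i v⟫_ℂ := by
          rw [ContinuousLinearMap.sum_apply, inner_sum]
      _ = ∑ i, ⟪e i Ω, v⟫_ℂ := by
          exact Finset.sum_congr rfl fun i _ => (hsym i Ω v).symm
  have horthΩ : ∀ i j, i ≠ j → ⟪e i Ω, e j Ω⟫_ℂ = 0 := by
    intro i j hij
    rw [hsym i Ω (e j Ω)]
    have : e i (e j Ω) = 0 := by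
      have := congrArg (fun T : H →L[ℂ] H => T Ω) (horth i j hij)
      simpa using this
    rw [this, inner_zero_right]
  -- bounded below
  have hbdd : BddBelow (Set.range fun ζ : H =>
      t * Complex.normSq ⟪Ω, ζ⟫_ℂ + ∑ i, Complex.normSq ⟪e i Ω, ξ - ζ⟫_ℂ) := by
    refine ⟨0, ?_⟩
    rintro x ⟨ζ, rfl⟩
    have h1 : 0 ≤ t * Complex.normSq ⟪Ω, ζ⟫_ℂ :=
      mul_nonneg ht.le (Complex.normSq_nonneg _)
    have h2 : 0 ≤ ∑ i, Complex.normSq ⟪e i Ω, ξ - ζ⟫_ℂ :=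
      Finset.sum_nonneg fun i _ => Complex.normSq_nonneg _
    exact add_nonneg h1 h2
  apply le_antisymm
  · -- upper bound via explicit minimizer
    set r : ℝ := t / ((N:ℝ) * t + 1) with hr
    set l : ℂ := (r : ℂ) * ⟪Ω, ξ⟫_ℂ with hl
    set ζ₀ : H := ∑ i, ((⟪e i Ω, ξ⟫_ℂ - l) / ⟪e i Ω, e i Ω⟫_ℂ) • (e i Ω) with hζ₀
    have hdiag : ∀ j, ⟪e j Ω, ζ₀⟫_ℂ = ⟪e j Ω, ξ⟫_ℂ - l := by
      intro j
      rw [hζ₀, inner_sum]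
      rw [Finset.sum_eq_single j]
      · rw [inner_smul_right]
        have hne' : ⟪e j Ω, e j Ω⟫_ℂ ≠ 0 := by
          rw [inner_self_ne_zero]; exact hne j
        field_simp
      · intro i _ hij
        rw [inner_smul_right, horthΩ j i (fun h => hij h.symm), mul_zero]
      · intro h; exact absurd (Finset.mem_univ j) h
    have hres : ∀ j, ⟪e j Ω, ξ - ζ₀⟫_ℂ = l := by
      intro j; rw [inner_sub_right, hdiag j]; ring
    have hΩζ : ⟪Ω, ζ₀⟫_ℂ = ⟪Ω, ξ⟫_ℂ - (N : ℂ) * l := by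
      rw [key ζ₀]
      rw [Finset.sum_congr rfl fun j _ => hdiag j, Finset.sum_sub_distrib,
        ← key ξ, Finset.sum_const, Finset.card_univ, Fintype.card_fin,
        nsmul_eq_mul]
    have hval : t * Complex.normSq ⟪Ω, ζ₀⟫_ℂ
        + ∑ i, Complex.normSq ⟪e i Ω, ξ - ζ₀⟫_ℂ
        = t / ((N:ℝ) * t + 1) * Complex.normSq ⟪Ω, ξ⟫_ℂ := by
      have h1 : ⟪Ω, ζ₀⟫_ℂ = ((1 - (N:ℝ) * r : ℝ) : ℂ) * ⟪Ω, ξ⟫_ℂ := by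
        rw [hΩζ, hl]; push_cast; ring
      rw [h1, Finset.sum_congr rfl fun i _ => by rw [hres i]]
      rw [Finset.sum_const, Finset.card_univ, Fintype.card_fin, nsmul_eq_mul,
        hl, Complex.normSq_mul, Complex.normSq_mul, Complex.normSq_ofReal,
        Complex.normSq_ofReal]
      have h2 : 1 - (N:ℝ) * r = 1 / ((N:ℝ) * t + 1) := by
        rw [hr]; field_simp; ring
      rw [h2, hr]
      field_simp
      ring
    calc (⨅ ζ : H, (t * Complex.normSq ⟪Ω, ζ⟫_ℂ
          + ∑ i, Complex.normSq ⟪e i Ω, ξ - ζ⟫_ℂ))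
        ≤ t * Complex.normSq ⟪Ω, ζ₀⟫_ℂ
          + ∑ i, Complex.normSq ⟪e i Ω, ξ - ζ₀⟫_ℂ := ciInf_le hbdd ζ₀
      _ = t / ((N:ℝ) * t + 1) * Complex.normSq ⟪Ω, ξ⟫_ℂ := hval
  · -- lower bound
    apply le_ciInf
    intro ζ
    set a : ℂ := ⟪Ω, ζ⟫_ℂ with ha
    have hsplit : ⟪Ω, ξ⟫_ℂ = a + ∑ i, ⟪e i Ω, ξ - ζ⟫_ℂ := by
      rw [← key (ξ - ζ), inner_sub_right, ha]; ring
    have hnormle : ‖⟪Ω, ξ⟫_ℂ‖ ≤ ‖a‖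
        + ∑ i, ‖⟪e i Ω, ξ - ζ⟫_ℂ‖ := by
      rw [hsplit]
      refine le_trans (norm_add_le _ _) ?_
      gcongr
      exact norm_sum_le _ _
    have hcs : (∑ i, ‖⟪e i Ω, ξ - ζ⟫_ℂ‖) ^ 2
        ≤ (N:ℝ) * ∑ i, Complex.normSq ⟪e i Ω, ξ - ζ⟫_ℂ := by
      have h := sq_sum_le_card_mul_sum_sq
        (s := (Finset.univ : Finset (Fin N))) (f := fun i => ‖⟪e i Ω, ξ - ζ⟫_ℂ‖)
      rw [Finset.card_univ, Fintype.card_fin] at h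
      refine le_trans h (le_of_eq ?_)
      congr 1
      exact Finset.sum_congr rfl fun i _ => Complex.sq_norm _
    have hmain := aux_real (N:ℝ) t (‖a‖)
      (∑ i, ‖⟪e i Ω, ξ - ζ⟫_ℂ‖)
      (∑ i, Complex.normSq ⟪e i Ω, ξ - ζ⟫_ℂ)
      (‖⟪Ω, ξ⟫_ℂ‖) hn1 ht (norm_nonneg _)
      (Finset.sum_nonneg fun i _ => norm_nonneg _)
      (Finset.sum_nonneg fun i _ => Complex.normSq_nonneg _)
      (norm_nonneg _) hnormle hcs
    calc t / ((N:ℝ) * t + 1) * Complex.normSq ⟪Ω, ξ⟫_ℂ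
        = t / ((N:ℝ) * t + 1) * ‖⟪Ω, ξ⟫_ℂ‖ ^ 2 := by
          rw [Complex.sq_norm]
      _ ≤ t * ‖a‖ ^ 2 + ∑ i, Complex.normSq ⟪e i Ω, ξ - ζ⟫_ℂ := hmain
      _ = t * Complex.normSq a + ∑ i, Complex.normSq ⟪e i Ω, ξ - ζ⟫_ℂ := by
          rw [Complex.sq_norm]

end BSPaper
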